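/- Let T1 be an (r × c1, v1)-near triple array and T2 an (r × c2, v2)-near triple array, with 2 ≤ r, 2 ≤ c1, 2 ≤ c2, max(r,c1) ≤ v1 ≤ r·c1 and max(r,c2) ≤ v2 ≤ r·c2, with average replication numbers e1, e2 and parameters λ_rr^1, λ_cc^1 and λ_rr^2, λ_cc^2. Assume (1) max(⌈e1⌉, ⌈e2⌉) − min(⌊e1⌋, ⌊e2⌋) ≤ 1, (2) λ_rr^1 is an integer or λ_rr^2 is an integer, and (3) λ_cc^1 ≤ 1 and λ_cc^2 ≤ 1. Then the r × (c1 + c2) design T on v1 + v2 symbols whose row i is the concatenation of row i of T1 and row i of T2 (with the two symbol sets made disjoint) is an (r × (c1 + c2), v1 + v2)-near triple array. -/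

import Mathlib

open Finset

/-- An `r × c` row-column design on `v` symbols is binary if no symbol occurs
twice in any row or in any column. -/
def IsBinaryDesign {r c v : ℕ} (T : Fin r × Fin c → Fin v) : Prop :=
  (∀ (i : Fin r) (j j' : Fin c), j ≠ j' → T (i, j) ≠ T (i, j')) ∧
  (∀ (j : Fin c) (i i' : Fin r), i ≠ i' → T (i, j) ≠ T (i', j))

/-- The replication number of a symbol `s`: the number of cells containing `s`. -/
def replNum {r c v : ℕ} (T : Fin r × Fin c → Fin v) (s : Fin v) : ℕ :=
  (Finset.univ.filter (fun p : Fin r × Fin c => T p = s)).card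

/-- The average replication number `e = rc/v` as a rational number. -/
def avgRepl (r c v : ℕ) : ℚ := ((r : ℚ) * (c : ℚ)) / (v : ℚ)

/-- A design is equireplicate if `e = rc/v` is an integer and every symbol has
replication number `e`. -/
def IsEquireplicate {r c v : ℕ} (T : Fin r × Fin c → Fin v) : Prop :=
  (avgRepl r c v).den = 1 ∧ ∀ s : Fin v, (replNum T s : ℚ) = avgRepl r c v

/-- A design is near equireplicate if `e = rc/v` is not an integer and every symbol
has replication number `⌊e⌋` or `⌈e⌉`. -/
def IsNearEquireplicate {r c v : ℕ} (T : Fin r × Fin c → Fin v) : Prop :=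
  (avgRepl r c v).den ≠ 1 ∧
  ∀ s : Fin v, (replNum T s : ℤ) = ⌊avgRepl r c v⌋ ∨ (replNum T s : ℤ) = ⌈avgRepl r c v⌉

/-- The set of symbols occurring in row `i`. -/
def rowSet {r c v : ℕ} (T : Fin r × Fin c → Fin v) (i : Fin r) : Finset (Fin v) :=
  Finset.univ.image (fun j : Fin c => T (i, j))

/-- The set of symbols occurring in column `j`. -/
def colSet {r c v : ℕ} (T : Fin r × Fin c → Fin v) (j : Fin c) : Finset (Fin v) :=
  Finset.univ.image (fun i : Fin r => T (i, j))

/-- Average row-column intersection size `λ_rc`. -/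
def lamRC {r c v : ℕ} (T : Fin r × Fin c → Fin v) : ℚ :=
  (∑ i : Fin r, ∑ j : Fin c, ((rowSet T i ∩ colSet T j).card : ℚ)) / ((r : ℚ) * (c : ℚ))

/-- Average row-row intersection size `λ_rr`. -/
def lamRR {r c v : ℕ} (T : Fin r × Fin c → Fin v) : ℚ :=
  (∑ p ∈ Finset.univ.filter (fun p : Fin r × Fin r => p.1 < p.2),
      ((rowSet T p.1 ∩ rowSet T p.2).card : ℚ)) / ((r : ℚ) * ((r : ℚ) - 1) / 2)

/-- Average column-column intersection size `λ_cc`. -/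
def lamCC {r c v : ℕ} (T : Fin r × Fin c → Fin v) : ℚ :=
  (∑ p ∈ Finset.univ.filter (fun p : Fin c × Fin c => p.1 < p.2),
      ((colSet T p.1 ∩ colSet T p.2).card : ℚ)) / ((c : ℚ) * ((c : ℚ) - 1) / 2)

/-- An `(r × c, v)`-near triple array. -/
def IsNearTripleArray {r c v : ℕ} (T : Fin r × Fin c → Fin v) : Prop :=
  IsBinaryDesign T ∧ (IsEquireplicate T ∨ IsNearEquireplicate T) ∧
  (∀ (i : Fin r) (j : Fin c),
    ((rowSet T i ∩ colSet T j).card : ℤ) = ⌊lamRC T⌋ ∨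
    ((rowSet T i ∩ colSet T j).card : ℤ) = ⌈lamRC T⌉) ∧
  (∀ i j : Fin r, i ≠ j →
    ((rowSet T i ∩ rowSet T j).card : ℤ) = ⌊lamRR T⌋ ∨
    ((rowSet T i ∩ rowSet T j).card : ℤ) = ⌈lamRR T⌉) ∧
  (∀ i j : Fin c, i ≠ j →
    ((colSet T i ∩ colSet T j).card : ℤ) = ⌊lamCC T⌋ ∨
    ((colSet T i ∩ colSet T j).card : ℤ) = ⌈lamCC T⌉)


theorem avg_pair {ι : Type*} [DecidableEq ι] (S : Finset ι) (hS : S.Nonempty) (f : ι → ℤ) (m : ℤ)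
    (hf : ∀ i ∈ S, f i = m ∨ f i = m + 1)
    (q : ℚ) (hq : q = (∑ i ∈ S, (f i : ℚ)) / S.card) :
    ∀ i ∈ S, f i = ⌊q⌋ ∨ f i = ⌈q⌉ := by
  have hn : (0:ℚ) < (S.card : ℚ) := by exact_mod_cast Finset.card_pos.mpr hS
  have hlb : (m : ℚ) * S.card ≤ ∑ i ∈ S, (f i : ℚ) := by
    calc (m : ℚ) * S.card = ∑ _i ∈ S, (m : ℚ) := by rw [Finset.sum_const]; ring
    _ ≤ ∑ i ∈ S, (f i : ℚ) := by
      apply Finset.sum_le_sum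
      intro i hi
      rcases hf i hi with h | h <;> rw [h] <;> push_cast <;> linarith
  have hub : ∑ i ∈ S, (f i : ℚ) ≤ (m + 1 : ℚ) * S.card := by
    calc ∑ i ∈ S, (f i : ℚ) ≤ ∑ _i ∈ S, (m + 1 : ℚ) := by
          apply Finset.sum_le_sum
          intro i hi
          rcases hf i hi with h | h <;> rw [h] <;> push_cast <;> linarith
    _ = (m + 1 : ℚ) * S.card := by rw [Finset.sum_const]; ring
  have hql : (m : ℚ) ≤ q := by rw [hq]; rw [le_div_iff₀ hn]; exact hlb
  have hqu : q ≤ (m : ℚ) + 1 := by rw [hq]; rw [div_le_iff₀ hn]; push_cast; push_cast at hub; linarith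
  intro i hi
  rcases hf i hi with h | h
  · left
    rw [h]
    symm
    rw [Int.floor_eq_iff]
    constructor
    · exact hql
    · -- q < m + 1 : since f i = m, sum ≤ (m+1)*card - 1
      have h2 : ∑ j ∈ S, (f j : ℚ) ≤ (m + 1 : ℚ) * S.card - 1 := by
        rw [← Finset.add_sum_erase S _ hi]
        have : ∑ j ∈ S.erase i, (f j : ℚ) ≤ (m + 1 : ℚ) * (S.erase i).card := by
          calc ∑ j ∈ S.erase i, (f j : ℚ) ≤ ∑ _j ∈ S.erase i, (m + 1 : ℚ) := by
                apply Finset.sum_le_sum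
                intro j hj
                rcases hf j (Finset.mem_of_mem_erase hj) with h' | h' <;> rw [h'] <;> push_cast <;> linarith
          _ = _ := by rw [Finset.sum_const]; ring
        have hcard : ((S.erase i).card : ℚ) = (S.card : ℚ) - 1 := by
          rw [Finset.card_erase_of_mem hi]
          have : 1 ≤ S.card := Finset.card_pos.mpr hS
          push_cast [Nat.cast_sub this]
          ring
        rw [hcard] at this
        rw [h]
        push_cast
        push_cast at this
        linarith
      rw [hq, div_lt_iff₀ hn]
      push_cast
      push_cast at h2
      linarith
  · right
    rw [h]
    symm
    rw [Int.ceil_eq_iff]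
    constructor
    · have h2 : (m : ℚ) * S.card + 1 ≤ ∑ j ∈ S, (f j : ℚ) := by
        rw [← Finset.add_sum_erase S _ hi]
        have : (m : ℚ) * (S.erase i).card ≤ ∑ j ∈ S.erase i, (f j : ℚ) := by
          calc (m:ℚ) * (S.erase i).card = ∑ _j ∈ S.erase i, (m : ℚ) := by rw [Finset.sum_const]; ring
          _ ≤ _ := by
            apply Finset.sum_le_sum
            intro j hj
            rcases hf j (Finset.mem_of_mem_erase hj) with h' | h' <;> rw [h'] <;> push_cast <;> linarith
        have hcard : ((S.erase i).card : ℚ) = (S.card : ℚ) - 1 := by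
          rw [Finset.card_erase_of_mem hi]
          have : 1 ≤ S.card := Finset.card_pos.mpr hS
          push_cast [Nat.cast_sub this]
          ring
        rw [hcard] at this
        rw [h]
        push_cast
        push_cast at this
        linarith
      rw [hq, lt_div_iff₀ hn]
      push_cast
      push_cast at h2
      linarith
    · push_cast; linarith
theorem sum_replNum {r c v : ℕ} (T : Fin r × Fin c → Fin v) :
    ∑ s : Fin v, replNum T s = r * c := by
  unfold replNum
  rw [← Finset.card_eq_sum_card_fiberwise (fun p _ => Finset.mem_univ (T p))]
  simp [Finset.card_univ]

theorem rowcnt {r c v : ℕ} (T : Fin r × Fin c → Fin v)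
    (hb : ∀ (i : Fin r) (j j' : Fin c), j ≠ j' → T (i, j) ≠ T (i, j')) (s : Fin v) :
    (Finset.univ.filter (fun i : Fin r => s ∈ rowSet T i)).card = replNum T s := by
  unfold replNum
  rw [← Finset.card_image_of_injOn (f := Prod.fst)
    (fun p hp q hq hpq => ?_)]
  · congr 1
    ext i
    simp only [Finset.mem_image, Finset.mem_filter, Finset.mem_univ, true_and, rowSet,
      Finset.mem_image]
    constructor
    · rintro ⟨j, hj⟩
      exact ⟨(i, j), by simp_all [eq_comm], rfl⟩
    · rintro ⟨p, hp, rfl⟩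
      exact ⟨p.2, by simp_all [eq_comm]⟩
  · simp only [Finset.coe_filter, Set.mem_setOf_eq, Finset.mem_univ, true_and,
      Finset.mem_coe, Finset.mem_filter] at hp hq
    obtain ⟨p1, p2⟩ := p
    obtain ⟨q1, q2⟩ := q
    simp only at hpq
    subst hpq
    by_contra hne
    exact hb p1 p2 q2 (fun h => hne (by simp [h])) (hp.trans hq.symm)

theorem colcnt {r c v : ℕ} (T : Fin r × Fin c → Fin v)
    (hb : ∀ (j : Fin c) (i i' : Fin r), i ≠ i' → T (i, j) ≠ T (i', j)) (s : Fin v) :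
    (Finset.univ.filter (fun j : Fin c => s ∈ colSet T j)).card = replNum T s := by
  unfold replNum
  rw [← Finset.card_image_of_injOn (f := Prod.snd)
    (fun p hp q hq hpq => ?_)]
  · congr 1
    ext j
    simp only [Finset.mem_image, Finset.mem_filter, Finset.mem_univ, true_and, colSet,
      Finset.mem_image]
    constructor
    · rintro ⟨i, hi⟩
      exact ⟨(i, j), by simp_all [eq_comm], rfl⟩
    · rintro ⟨p, hp, rfl⟩
      exact ⟨p.1, by simp_all [eq_comm]⟩
  · simp only [Finset.coe_filter, Set.mem_setOf_eq, Finset.mem_univ, true_and,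
      Finset.mem_coe, Finset.mem_filter] at hp hq
    obtain ⟨p1, p2⟩ := p
    obtain ⟨q1, q2⟩ := q
    simp only at hpq
    subst hpq
    by_contra hne
    exact hb p2 p1 q1 (fun h => hne (by simp [h])) (hp.trans hq.symm)

theorem rcSum {r c v : ℕ} (T : Fin r × Fin c → Fin v)
    (hb : (∀ (i : Fin r) (j j' : Fin c), j ≠ j' → T (i, j) ≠ T (i, j')) ∧
      (∀ (j : Fin c) (i i' : Fin r), i ≠ i' → T (i, j) ≠ T (i', j))) :
    ∑ i : Fin r, ∑ j : Fin c, (rowSet T i ∩ colSet T j).card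
      = ∑ s : Fin v, (replNum T s) ^ 2 := by
  have key : ∀ (i : Fin r) (j : Fin c), (rowSet T i ∩ colSet T j).card
      = ∑ s : Fin v, (if s ∈ rowSet T i then 1 else 0) * (if s ∈ colSet T j then 1 else 0) := by
    intro i j
    rw [show rowSet T i ∩ colSet T j
        = Finset.univ.filter (fun s => s ∈ rowSet T i ∧ s ∈ colSet T j) by ext; simp,
      Finset.card_filter]
    apply Finset.sum_congr rfl
    intro s _
    by_cases h1 : s ∈ rowSet T i <;> by_cases h2 : s ∈ colSet T j <;> simp [h1, h2]
  calc ∑ i : Fin r, ∑ j : Fin c, (rowSet T i ∩ colSet T j).card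
      = ∑ i : Fin r, ∑ j : Fin c, ∑ s : Fin v,
        (if s ∈ rowSet T i then 1 else 0) * (if s ∈ colSet T j then 1 else 0) := by
        simp only [key]
    _ = ∑ i : Fin r, ∑ s : Fin v, ∑ j : Fin c,
        (if s ∈ rowSet T i then 1 else 0) * (if s ∈ colSet T j then 1 else 0) := by
        exact Finset.sum_congr rfl (fun i _ => Finset.sum_comm)
    _ = ∑ s : Fin v, ∑ i : Fin r, ∑ j : Fin c,
        (if s ∈ rowSet T i then 1 else 0) * (if s ∈ colSet T j then 1 else 0) := by
        exact Finset.sum_comm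
    _ = ∑ s : Fin v, (∑ i : Fin r, if s ∈ rowSet T i then 1 else 0)
        * (∑ j : Fin c, if s ∈ colSet T j then 1 else 0) := by
        exact Finset.sum_congr rfl (fun s _ => (Finset.sum_mul_sum _ _ _ _).symm)
    _ = ∑ s : Fin v, (replNum T s) ^ 2 := by
        apply Finset.sum_congr rfl
        intro s _
        rw [← Finset.card_filter, ← Finset.card_filter, rowcnt T hb.1 s, colcnt T hb.2 s, sq]

theorem pairs_card (n : ℕ) :
    ((Finset.univ : Finset (Fin n × Fin n)).filter fun p => p.1 < p.2).card * 2 = n * (n - 1) := by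
  have h : ((Finset.univ : Finset (Fin n × Fin n)).filter fun p => p.1 < p.2).card
      = ∑ b : Fin n, (b : ℕ) := by
    rw [Finset.card_filter, Fintype.sum_prod_type_right]
    apply Finset.sum_congr rfl
    intro b _
    rw [← Finset.card_filter]
    rw [show Finset.univ.filter (fun a : Fin n => a < b) = Finset.Iio b by ext; simp]
    exact Fin.card_Iio b
  rw [h, Fin.sum_univ_eq_sum_range (fun i => i) n, Finset.sum_range_id_mul_two]
section
variable {r c1 c2 v1 v2 : ℕ}
  (T1 : Fin r × Fin c1 → Fin v1) (T2 : Fin r × Fin c2 → Fin v2)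
  (T : Fin r × Fin (c1 + c2) → Fin (v1 + v2))

abbrev E1 : Fin v1 → Fin (v1 + v2) := Fin.castLE (Nat.le_add_right v1 v2)
abbrev E2 : Fin v2 → Fin (v1 + v2) := Fin.natAdd v1

variable (hT : ∀ (i : Fin r) (j : Fin (c1 + c2)),
      T (i, j) = if h : (j : ℕ) < c1
        then Fin.castLE (Nat.le_add_right v1 v2) (T1 (i, ⟨(j : ℕ), h⟩))
        else Fin.natAdd v1 (T2 (i, ⟨(j : ℕ) - c1, by have := j.isLt; omega⟩)))

include hT

theorem hrow (i : Fin r) :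
    rowSet T i = (rowSet T1 i).image (E1 (v2 := v2)) ∪ (rowSet T2 i).image (E2 (v1 := v1)) := by
  ext x
  simp only [rowSet, Finset.mem_union, Finset.mem_image, Finset.mem_univ, true_and]
  constructor
  · rintro ⟨j, rfl⟩
    rw [hT]
    split_ifs with h
    · exact Or.inl ⟨T1 (i, ⟨j, h⟩), ⟨⟨j, h⟩, rfl⟩, rfl⟩
    · exact Or.inr ⟨T2 (i, ⟨j - c1, by have := j.isLt; omega⟩),
        ⟨⟨j - c1, by have := j.isLt; omega⟩, rfl⟩, rfl⟩
  · rintro (⟨y, ⟨j1, rfl⟩, rfl⟩ | ⟨y, ⟨j2, rfl⟩, rfl⟩)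
    · refine ⟨⟨j1, by omega⟩, ?_⟩
      rw [hT]
      split_ifs with h
      · rfl
      · exact absurd j1.isLt (by simpa using h)
    · refine ⟨⟨c1 + j2, by omega⟩, ?_⟩
      rw [hT, dif_neg (by simp)]
      simp only [E2]
      congr 1
      ext
      simp

theorem hcolA (j : Fin (c1 + c2)) (hj : (j : ℕ) < c1) :
    colSet T j = (colSet T1 ⟨(j : ℕ), hj⟩).image (E1 (v2 := v2)) := by
  ext x
  simp only [colSet, Finset.mem_image, Finset.mem_univ, true_and]
  constructor
  · rintro ⟨i, rfl⟩
    rw [hT, dif_pos hj]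
    exact ⟨T1 (i, ⟨j, hj⟩), ⟨i, rfl⟩, rfl⟩
  · rintro ⟨y, ⟨i, rfl⟩, rfl⟩
    exact ⟨i, by rw [hT, dif_pos hj]⟩

theorem hcolB (j : Fin (c1 + c2)) (hj : ¬ (j : ℕ) < c1) :
    colSet T j = (colSet T2 ⟨(j : ℕ) - c1, by have := j.isLt; omega⟩).image (E2 (v1 := v1)) := by
  ext x
  simp only [colSet, Finset.mem_image, Finset.mem_univ, true_and]
  constructor
  · rintro ⟨i, rfl⟩
    rw [hT, dif_neg hj]
    exact ⟨T2 (i, ⟨j - c1, by have := j.isLt; omega⟩), ⟨i, rfl⟩, rfl⟩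
  · rintro ⟨y, ⟨i, rfl⟩, rfl⟩
    exact ⟨i, by rw [hT, dif_neg hj]⟩

end

section
variable {r c1 c2 v1 v2 : ℕ}
  (T1 : Fin r × Fin c1 → Fin v1) (T2 : Fin r × Fin c2 → Fin v2)
  (T : Fin r × Fin (c1 + c2) → Fin (v1 + v2))

theorem injE1 : Function.Injective (E1 (v1 := v1) (v2 := v2)) :=
  fun a b h => by simpa [E1, Fin.ext_iff] using h

theorem injE2 : Function.Injective (E2 (v1 := v1) (v2 := v2)) :=
  fun a b h => by
    simp only [E2, Fin.ext_iff, Fin.natAdd] at h ⊢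
    omega

theorem neE12 (a : Fin v1) (b : Fin v2) : E1 (v2 := v2) a ≠ E2 b := by
  intro h
  have h' : ((E1 (v2 := v2) a) : ℕ) = ((E2 (v1 := v1) b) : ℕ) := by rw [h]
  have h1 : ((E1 (v2 := v2) a) : ℕ) = a := rfl
  have h2 : ((E2 (v1 := v1) b) : ℕ) = v1 + b := rfl
  have := a.isLt
  omega

theorem inter_image_eq (A C : Finset (Fin v1)) (B : Finset (Fin v2)) :
    ((A.image (E1 (v2 := v2)) ∪ B.image E2) ∩ C.image (E1 (v2 := v2)))
      = (A ∩ C).image (E1 (v2 := v2)) := by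
  rw [Finset.union_inter_distrib_right, ← Finset.image_inter _ _ injE1]
  have : (B.image (E2 (v1 := v1)) ∩ C.image E1) = ∅ := by
    rw [Finset.eq_empty_iff_forall_notMem]
    intro x hx
    simp only [Finset.mem_inter, Finset.mem_image] at hx
    obtain ⟨⟨b, _, hb⟩, ⟨a, _, ha⟩⟩ := hx
    exact neE12 a b (ha.trans hb.symm)
  rw [this, Finset.union_empty]

theorem inter_image_eq2 (A : Finset (Fin v1)) (B C : Finset (Fin v2)) :
    ((A.image (E1 (v2 := v2)) ∪ B.image E2) ∩ C.image (E2 (v1 := v1)))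
      = (B ∩ C).image (E2 (v1 := v1)) := by
  rw [Finset.union_inter_distrib_right, ← Finset.image_inter _ _ injE2]
  have : (A.image (E1 (v2 := v2)) ∩ C.image E2) = ∅ := by
    rw [Finset.eq_empty_iff_forall_notMem]
    intro x hx
    simp only [Finset.mem_inter, Finset.mem_image] at hx
    obtain ⟨⟨a, _, ha⟩, ⟨b, _, hb⟩⟩ := hx
    exact neE12 a b (ha.trans hb.symm)
  rw [this, Finset.empty_union]

theorem union_inter_union (A A' : Finset (Fin v1)) (B B' : Finset (Fin v2)) :
    ((A.image (E1 (v2 := v2)) ∪ B.image E2) ∩ (A'.image (E1 (v2 := v2)) ∪ B'.image E2)).card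
      = (A ∩ A').card + (B ∩ B').card := by
  rw [Finset.inter_union_distrib_left, inter_image_eq, inter_image_eq2]
  rw [Finset.card_union_of_disjoint, Finset.card_image_of_injective _ injE1,
    Finset.card_image_of_injective _ injE2]
  rw [Finset.disjoint_left]
  intro x hx hx'
  simp only [Finset.mem_image] at hx hx'
  obtain ⟨a, _, ha⟩ := hx
  obtain ⟨b, _, hb⟩ := hx'
  exact neE12 a b (ha.trans hb.symm)

end

section
variable {r c1 c2 v1 v2 : ℕ}
  (T1 : Fin r × Fin c1 → Fin v1) (T2 : Fin r × Fin c2 → Fin v2)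
  (T : Fin r × Fin (c1 + c2) → Fin (v1 + v2))

variable (hT : ∀ (i : Fin r) (j : Fin (c1 + c2)),
      T (i, j) = if h : (j : ℕ) < c1
        then Fin.castLE (Nat.le_add_right v1 v2) (T1 (i, ⟨(j : ℕ), h⟩))
        else Fin.natAdd v1 (T2 (i, ⟨(j : ℕ) - c1, by have := j.isLt; omega⟩)))

include hT

theorem replA (s : Fin (v1 + v2)) (hs : (s : ℕ) < v1) :
    replNum T s = replNum T1 ⟨(s : ℕ), hs⟩ := by
  unfold replNum
  rw [show (Finset.univ.filter (fun p : Fin r × Fin (c1 + c2) => T p = s))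
      = (Finset.univ.filter (fun p : Fin r × Fin c1 => T1 p = ⟨(s : ℕ), hs⟩)).image
        (fun p => (p.1, Fin.castAdd c2 p.2)) from ?_,
    Finset.card_image_of_injective]
  · intro p q hpq
    simp only [Prod.ext_iff, Fin.ext_iff, Fin.coe_castAdd] at hpq
    exact Prod.ext (Fin.ext hpq.1) (Fin.ext hpq.2)
  · ext ⟨i, j⟩
    simp only [Finset.mem_filter, Finset.mem_univ, true_and, Finset.mem_image, Prod.ext_iff]
    constructor
    · intro h
      rw [hT] at h
      by_cases hj : (j : ℕ) < c1
      · rw [dif_pos hj] at h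
        refine ⟨(i, ⟨(j : ℕ), hj⟩), ?_, rfl, Fin.ext rfl⟩
        have := congrArg Fin.val h
        exact Fin.ext this
      · rw [dif_neg hj] at h
        have := congrArg Fin.val h
        simp only [Fin.coe_natAdd] at this
        omega
    · rintro ⟨⟨i', j'⟩, hmem, h1, h2⟩
      simp only at h1 h2
      subst h1
      have hj : (j : ℕ) < c1 := by
        have := congrArg Fin.val h2
        simp only [Fin.coe_castAdd] at this
        omega
      rw [hT, dif_pos hj]
      have hj' : (⟨(j : ℕ), hj⟩ : Fin c1) = j' := by
        have := congrArg Fin.val h2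
        simp only [Fin.coe_castAdd] at this
        exact Fin.ext (show (j : ℕ) = (j' : ℕ) by omega)
      rw [hj', hmem]
      exact Fin.ext rfl

theorem replB (s : Fin (v1 + v2)) (hs : ¬ (s : ℕ) < v1) :
    replNum T s = replNum T2 ⟨(s : ℕ) - v1, by have := s.isLt; omega⟩ := by
  unfold replNum
  rw [show (Finset.univ.filter (fun p : Fin r × Fin (c1 + c2) => T p = s))
      = (Finset.univ.filter
          (fun p : Fin r × Fin c2 => T2 p = ⟨(s : ℕ) - v1, by have := s.isLt; omega⟩)).image
        (fun p => (p.1, Fin.natAdd c1 p.2)) from ?_,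
    Finset.card_image_of_injective]
  · intro p q hpq
    simp only [Prod.ext_iff, Fin.ext_iff, Fin.coe_natAdd] at hpq
    exact Prod.ext (Fin.ext hpq.1) (Fin.ext (by omega))
  · ext ⟨i, j⟩
    simp only [Finset.mem_filter, Finset.mem_univ, true_and, Finset.mem_image, Prod.ext_iff]
    constructor
    · intro h
      rw [hT] at h
      by_cases hj : (j : ℕ) < c1
      · rw [dif_pos hj] at h
        have := congrArg Fin.val h
        have h2 := (T1 (i, ⟨(j : ℕ), hj⟩)).isLt
        simp only [Fin.coe_castLE] at this
        omega
      · rw [dif_neg hj] at h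
        refine ⟨(i, ⟨(j : ℕ) - c1, by have := j.isLt; omega⟩), ?_, rfl,
          Fin.ext (show c1 + ((j : ℕ) - c1) = (j : ℕ) by omega)⟩
        have := congrArg Fin.val h
        simp only [Fin.coe_natAdd] at this
        exact Fin.ext (show ((T2 (i, ⟨(j : ℕ) - c1, by have := j.isLt; omega⟩)) : ℕ) = (s : ℕ) - v1 by omega)
    · rintro ⟨⟨i', j'⟩, hmem, h1, h2⟩
      simp only at h1 h2
      subst h1
      have hj : ¬ (j : ℕ) < c1 := by
        have := congrArg Fin.val h2
        simp only [Fin.coe_natAdd] at this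
        omega
      rw [hT, dif_neg hj]
      have hj' : (⟨(j : ℕ) - c1, by have := j.isLt; omega⟩ : Fin c2) = j' := by
        have := congrArg Fin.val h2
        simp only [Fin.coe_natAdd] at this
        exact Fin.ext (show (j : ℕ) - c1 = (j' : ℕ) by omega)
      rw [hj', hmem]
      exact Fin.ext (show v1 + ((s : ℕ) - v1) = (s : ℕ) by omega)

theorem binaryT (hb1 : IsBinaryDesign T1) (hb2 : IsBinaryDesign T2) : IsBinaryDesign T := by
  constructor
  · intro i j j' hne heq
    rw [hT, hT] at heq
    by_cases h : (j : ℕ) < c1 <;> by_cases h' : (j' : ℕ) < c1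
    · simp only [dif_pos h, dif_pos h'] at heq
      refine hb1.1 i ⟨(j : ℕ), h⟩ ⟨(j' : ℕ), h'⟩ ?_ (injE1 heq)
      simp only [ne_eq, Fin.ext_iff]
      exact fun hh => hne (Fin.ext hh)
    · simp only [dif_pos h, dif_neg h'] at heq
      exact neE12 _ _ heq
    · simp only [dif_neg h, dif_pos h'] at heq
      exact neE12 _ _ heq.symm
    · simp only [dif_neg h, dif_neg h'] at heq
      refine hb2.1 i _ _ ?_ (injE2 heq)
      simp only [ne_eq, Fin.ext_iff, Fin.val_mk]
      have := j.isLt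
      have := j'.isLt
      intro hh
      exact hne (Fin.ext (by omega))
  · intro j i i' hne heq
    rw [hT, hT] at heq
    by_cases h : (j : ℕ) < c1
    · simp only [dif_pos h] at heq
      exact hb1.2 _ i i' hne (injE1 heq)
    · simp only [dif_neg h] at heq
      exact hb2.2 _ i i' hne (injE2 heq)

end

set_option maxHeartbeats 2000000 in
/-- Juxtaposition of two near triple arrays with compatible parameters
(replication intervals overlapping in consecutive integers, one of the `λ_rr`
integral, both `λ_cc ≤ 1`) is a near triple array. -/
theorem nearTripleArray_concat {r c1 c2 v1 v2 : ℕ} (hr : 2 ≤ r)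
    (hc1 : 2 ≤ c1) (hc2 : 2 ≤ c2)
    (hv1a : max r c1 ≤ v1) (hv1b : v1 ≤ r * c1)
    (hv2a : max r c2 ≤ v2) (hv2b : v2 ≤ r * c2)
    (T1 : Fin r × Fin c1 → Fin v1) (hT1 : IsNearTripleArray T1)
    (T2 : Fin r × Fin c2 → Fin v2) (hT2 : IsNearTripleArray T2)
    (h1 : max ⌈avgRepl r c1 v1⌉ ⌈avgRepl r c2 v2⌉
        - min ⌊avgRepl r c1 v1⌋ ⌊avgRepl r c2 v2⌋ ≤ 1)
    (h2 : (lamRR T1).den = 1 ∨ (lamRR T2).den = 1)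
    (h3 : lamCC T1 ≤ 1 ∧ lamCC T2 ≤ 1)
    (T : Fin r × Fin (c1 + c2) → Fin (v1 + v2))
    (hT : ∀ (i : Fin r) (j : Fin (c1 + c2)),
      T (i, j) = if h : (j : ℕ) < c1
        then Fin.castLE (Nat.le_add_right v1 v2) (T1 (i, ⟨(j : ℕ), h⟩))
        else Fin.natAdd v1 (T2 (i, ⟨(j : ℕ) - c1, by have := j.isLt; omega⟩))) :
    IsNearTripleArray T := by

  have hb1 := hT1.1
  have hb2 := hT2.1
  set e1 := avgRepl r c1 v1 with he1
  set e2 := avgRepl r c2 v2 with he2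
  set m : ℤ := min ⌊e1⌋ ⌊e2⌋ with hm
  -- integer bounds
  have hfc1 : ⌊e1⌋ ≤ ⌈e1⌉ := Int.floor_le_ceil e1
  have hfc2 : ⌊e2⌋ ≤ ⌈e2⌉ := Int.floor_le_ceil e2
  have hme1 : m ≤ ⌊e1⌋ := min_le_left _ _
  have hme2 : m ≤ ⌊e2⌋ := min_le_right _ _
  have hce1 : ⌈e1⌉ ≤ m + 1 := by
    have := le_max_left ⌈e1⌉ ⌈e2⌉; omega
  have hce2 : ⌈e2⌉ ≤ m + 1 := by
    have := le_max_right ⌈e1⌉ ⌈e2⌉; omega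
  have hm0 : 0 ≤ m := by
    have h01 : (0 : ℚ) ≤ e1 := by
      rw [he1]; unfold avgRepl; positivity
    have h02 : (0 : ℚ) ≤ e2 := by
      rw [he2]; unfold avgRepl; positivity
    have := Int.le_floor.mpr (by exact_mod_cast h01 : ((0 : ℤ) : ℚ) ≤ e1)
    have := Int.le_floor.mpr (by exact_mod_cast h02 : ((0 : ℤ) : ℚ) ≤ e2)
    omega
  -- replication number bounds for T1 and T2
  have hrep1 : ∀ s : Fin v1, (replNum T1 s : ℤ) = m ∨ (replNum T1 s : ℤ) = m + 1 := by
    intro s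
    rcases hT1.2.1 with heq | hne
    · have h := heq.2 s
      have h' : ((replNum T1 s : ℤ) : ℚ) = e1 := by exact_mod_cast h
      have hfl : ⌊e1⌋ = (replNum T1 s : ℤ) := by rw [← h', Int.floor_intCast]
      have hcl : ⌈e1⌉ = (replNum T1 s : ℤ) := by rw [← h', Int.ceil_intCast]
      omega
    · rcases hne.2 s with h | h <;> rw [← he1] at h <;> omega
  have hrep2 : ∀ s : Fin v2, (replNum T2 s : ℤ) = m ∨ (replNum T2 s : ℤ) = m + 1 := by
    intro s
    rcases hT2.2.1 with heq | hne
    · have h := heq.2 s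
      have h' : ((replNum T2 s : ℤ) : ℚ) = e2 := by exact_mod_cast h
      have hfl : ⌊e2⌋ = (replNum T2 s : ℤ) := by rw [← h', Int.floor_intCast]
      have hcl : ⌈e2⌉ = (replNum T2 s : ℤ) := by rw [← h', Int.ceil_intCast]
      omega
    · rcases hne.2 s with h | h <;> rw [← he2] at h <;> omega
  have hrepT : ∀ s : Fin (v1 + v2), (replNum T s : ℤ) = m ∨ (replNum T s : ℤ) = m + 1 := by
    intro s
    by_cases hs : (s : ℕ) < v1
    · rw [replA T1 T2 T hT s hs]; exact hrep1 _
    · rw [replB T1 T2 T hT s hs]; exact hrep2 _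
  refine ⟨binaryT T1 T2 T hT hb1 hb2, ?_, ?_, ?_, ?_⟩
  · -- equireplicate or near equireplicate
    have hv1pos : 0 < v1 := lt_of_lt_of_le (lt_of_lt_of_le (by omega) (le_max_left r c1)) hv1a
    haveI : Nonempty (Fin (v1 + v2)) := ⟨⟨0, by omega⟩⟩
    have hsumT : ∑ s : Fin (v1 + v2), replNum T s = r * (c1 + c2) := sum_replNum T
    have havg : avgRepl r (c1 + c2) (v1 + v2)
        = (∑ s : Fin (v1 + v2), (((fun s => (replNum T s : ℤ)) s : ℤ) : ℚ))
          / ((Finset.univ : Finset (Fin (v1 + v2))).card : ℚ) := by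
      have hs : (∑ s : Fin (v1 + v2), ((replNum T s : ℤ) : ℚ))
          = ((r * (c1 + c2) : ℕ) : ℚ) := by
        rw [← hsumT]; push_cast; rfl
      rw [Finset.card_univ, Fintype.card_fin]
      unfold avgRepl
      rw [hs]
      push_cast
      ring
    have key := avg_pair Finset.univ Finset.univ_nonempty (fun s => (replNum T s : ℤ)) m
      (fun s _ => hrepT s) (avgRepl r (c1 + c2) (v1 + v2)) havg
    by_cases hden : (avgRepl r (c1 + c2) (v1 + v2)).den = 1
    · left
      refine ⟨hden, fun s => ?_⟩
      have hnum : (((avgRepl r (c1 + c2) (v1 + v2)).num : ℤ) : ℚ)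
          = avgRepl r (c1 + c2) (v1 + v2) := (Rat.den_eq_one_iff _).mp hden
      have hfl : ⌊avgRepl r (c1 + c2) (v1 + v2)⌋ = (avgRepl r (c1 + c2) (v1 + v2)).num := by
        conv_lhs => rw [← hnum]
        exact Int.floor_intCast _
      have hcl : ⌈avgRepl r (c1 + c2) (v1 + v2)⌉ = (avgRepl r (c1 + c2) (v1 + v2)).num := by
        conv_lhs => rw [← hnum]
        exact Int.ceil_intCast _
      have hint : ((replNum T s : ℤ) : ℚ) = avgRepl r (c1 + c2) (v1 + v2) := by
        rcases key s (Finset.mem_univ s) with h | h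
        · rw [h, hfl, hnum]
        · rw [h, hcl, hnum]
      exact_mod_cast hint
    · right
      exact ⟨hden, fun s => key s (Finset.mem_univ s)⟩
  · -- rc condition
    haveI : Nonempty (Fin r × Fin (c1 + c2)) := ⟨(⟨0, by omega⟩, ⟨0, by omega⟩)⟩
    have hmq : (0 : ℚ) ≤ (m : ℚ) := by exact_mod_cast hm0
    have hbound1 : (m : ℚ) ≤ lamRC T1 ∧ lamRC T1 ≤ (m : ℚ) + 1 := by
      have hpos : (0 : ℚ) < (r : ℚ) * (c1 : ℚ) := by
        have : (0:ℕ) < r * c1 := by positivity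
        exact_mod_cast this
      have hnum : ∑ i : Fin r, ∑ j : Fin c1, ((rowSet T1 i ∩ colSet T1 j).card : ℚ)
          = ∑ s : Fin v1, ((replNum T1 s : ℚ)) ^ 2 := by
        have h := rcSum T1 ⟨hb1.1, hb1.2⟩
        exact_mod_cast h
      have hsum1 : ∑ s : Fin v1, ((replNum T1 s : ℚ)) = (r : ℚ) * (c1 : ℚ) := by
        have h := sum_replNum T1
        exact_mod_cast h
      have hlow : (m : ℚ) * ((r : ℚ) * (c1 : ℚ)) ≤ ∑ s : Fin v1, ((replNum T1 s : ℚ)) ^ 2 := by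
        rw [← hsum1, Finset.mul_sum]
        apply Finset.sum_le_sum
        intro s _
        rcases hrep1 s with h | h <;>
          (have h' : (replNum T1 s : ℚ) = ((replNum T1 s : ℤ) : ℚ) := by push_cast; rfl) <;>
          rw [h', h] <;> push_cast <;> nlinarith [hmq]
      have hup : ∑ s : Fin v1, ((replNum T1 s : ℚ)) ^ 2 ≤ ((m : ℚ) + 1) * ((r : ℚ) * (c1 : ℚ)) := by
        rw [← hsum1, Finset.mul_sum]
        apply Finset.sum_le_sum
        intro s _
        rcases hrep1 s with h | h <;>
          (have h' : (replNum T1 s : ℚ) = ((replNum T1 s : ℤ) : ℚ) := by push_cast; rfl) <;>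
          rw [h', h] <;> push_cast <;> nlinarith [hmq]
      unfold lamRC
      rw [hnum]
      constructor
      · rw [le_div_iff₀ hpos]; exact hlow
      · rw [div_le_iff₀ hpos]; exact hup
    have hbound2 : (m : ℚ) ≤ lamRC T2 ∧ lamRC T2 ≤ (m : ℚ) + 1 := by
      have hpos : (0 : ℚ) < (r : ℚ) * (c2 : ℚ) := by
        have : (0:ℕ) < r * c2 := by positivity
        exact_mod_cast this
      have hnum : ∑ i : Fin r, ∑ j : Fin c2, ((rowSet T2 i ∩ colSet T2 j).card : ℚ)
          = ∑ s : Fin v2, ((replNum T2 s : ℚ)) ^ 2 := by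
        have h := rcSum T2 ⟨hb2.1, hb2.2⟩
        exact_mod_cast h
      have hsum1 : ∑ s : Fin v2, ((replNum T2 s : ℚ)) = (r : ℚ) * (c2 : ℚ) := by
        have h := sum_replNum T2
        exact_mod_cast h
      have hlow : (m : ℚ) * ((r : ℚ) * (c2 : ℚ)) ≤ ∑ s : Fin v2, ((replNum T2 s : ℚ)) ^ 2 := by
        rw [← hsum1, Finset.mul_sum]
        apply Finset.sum_le_sum
        intro s _
        rcases hrep2 s with h | h <;>
          (have h' : (replNum T2 s : ℚ) = ((replNum T2 s : ℤ) : ℚ) := by push_cast; rfl) <;>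
          rw [h', h] <;> push_cast <;> nlinarith [hmq]
      have hup : ∑ s : Fin v2, ((replNum T2 s : ℚ)) ^ 2 ≤ ((m : ℚ) + 1) * ((r : ℚ) * (c2 : ℚ)) := by
        rw [← hsum1, Finset.mul_sum]
        apply Finset.sum_le_sum
        intro s _
        rcases hrep2 s with h | h <;>
          (have h' : (replNum T2 s : ℚ) = ((replNum T2 s : ℤ) : ℚ) := by push_cast; rfl) <;>
          rw [h', h] <;> push_cast <;> nlinarith [hmq]
      unfold lamRC
      rw [hnum]
      constructor
      · rw [le_div_iff₀ hpos]; exact hlow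
      · rw [div_le_iff₀ hpos]; exact hup
    have hf1 : m ≤ ⌊lamRC T1⌋ := Int.le_floor.mpr hbound1.1
    have hc1' : ⌈lamRC T1⌉ ≤ m + 1 := Int.ceil_le.mpr (by push_cast; exact hbound1.2)
    have hfc1' : ⌊lamRC T1⌋ ≤ ⌈lamRC T1⌉ := Int.floor_le_ceil _
    have hf2 : m ≤ ⌊lamRC T2⌋ := Int.le_floor.mpr hbound2.1
    have hc2' : ⌈lamRC T2⌉ ≤ m + 1 := Int.ceil_le.mpr (by push_cast; exact hbound2.2)
    have hfc2' : ⌊lamRC T2⌋ ≤ ⌈lamRC T2⌉ := Int.floor_le_ceil _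
    have hval : ∀ p : Fin r × Fin (c1 + c2),
        (((rowSet T p.1 ∩ colSet T p.2).card : ℤ)) = m
        ∨ (((rowSet T p.1 ∩ colSet T p.2).card : ℤ)) = m + 1 := by
      rintro ⟨i, j⟩
      by_cases hj : (j : ℕ) < c1
      · have hc : (rowSet T i ∩ colSet T j).card
            = (rowSet T1 i ∩ colSet T1 ⟨(j : ℕ), hj⟩).card := by
          rw [hrow T1 T2 T hT i, hcolA T1 T2 T hT j hj, inter_image_eq,
            Finset.card_image_of_injective _ injE1]
        simp only [hc]
        rcases hT1.2.2.1 i ⟨(j : ℕ), hj⟩ with h | h <;> omega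
      · have hc : (rowSet T i ∩ colSet T j).card
            = (rowSet T2 i ∩ colSet T2 ⟨(j : ℕ) - c1, by have := j.isLt; omega⟩).card := by
          rw [hrow T1 T2 T hT i, hcolB T1 T2 T hT j hj, inter_image_eq2,
            Finset.card_image_of_injective _ injE2]
        simp only [hc]
        rcases hT2.2.2.1 i ⟨(j : ℕ) - c1, by have := j.isLt; omega⟩ with h | h <;> omega
    have hq : lamRC T
        = (∑ p ∈ (Finset.univ : Finset (Fin r × Fin (c1 + c2))),
            ((((rowSet T p.1 ∩ colSet T p.2).card : ℤ)) : ℚ))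
          / ((Finset.univ : Finset (Fin r × Fin (c1 + c2))).card : ℚ) := by
      rw [Finset.card_univ]
      unfold lamRC
      rw [Fintype.sum_prod_type]
      have : (Fintype.card (Fin r × Fin (c1 + c2)) : ℚ) = (r : ℚ) * ((c1 + c2 : ℕ) : ℚ) := by
        simp [Fintype.card_prod]
      rw [this]
      push_cast
      ring_nf
    have key := avg_pair Finset.univ Finset.univ_nonempty
      (fun p : Fin r × Fin (c1 + c2) => ((rowSet T p.1 ∩ colSet T p.2).card : ℤ)) m
      (fun p _ => hval p) (lamRC T) hq
    intro i j
    have h := key (i, j) (Finset.mem_univ _)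
    simpa using h
  · -- rr condition
    have hrrcard : ∀ i i' : Fin r, (rowSet T i ∩ rowSet T i').card
        = (rowSet T1 i ∩ rowSet T1 i').card + (rowSet T2 i ∩ rowSet T2 i').card := by
      intro i i'
      rw [hrow T1 T2 T hT i, hrow T1 T2 T hT i', union_inter_union]
    have hrrsum : lamRR T = lamRR T1 + lamRR T2 := by
      unfold lamRR
      rw [← add_div]
      congr 1
      rw [← Finset.sum_add_distrib]
      apply Finset.sum_congr rfl
      intro p _
      rw [hrrcard p.1 p.2]
      push_cast
      ring
    intro i j hne
    have hcv : ((rowSet T i ∩ rowSet T j).card : ℤ)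
        = ((rowSet T1 i ∩ rowSet T1 j).card : ℤ) + ((rowSet T2 i ∩ rowSet T2 j).card : ℤ) := by
      rw [hrrcard i j]; push_cast; ring
    have hn1 := hT1.2.2.2.1 i j hne
    have hn2 := hT2.2.2.2.1 i j hne
    rcases h2 with hd1 | hd2
    · have hnum : (((lamRR T1).num : ℤ) : ℚ) = lamRR T1 := (Rat.den_eq_one_iff _).mp hd1
      have hfl1 : ⌊lamRR T1⌋ = (lamRR T1).num := by
        conv_lhs => rw [← hnum]
        exact Int.floor_intCast _
      have hcl1 : ⌈lamRR T1⌉ = (lamRR T1).num := by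
        conv_lhs => rw [← hnum]
        exact Int.ceil_intCast _
      have hn1' : ((rowSet T1 i ∩ rowSet T1 j).card : ℤ) = (lamRR T1).num := by
        rcases hn1 with h | h
        · rw [h, hfl1]
        · rw [h, hcl1]
      have hfloorT : ⌊lamRR T⌋ = (lamRR T1).num + ⌊lamRR T2⌋ := by
        have h' := Int.floor_intCast_add (lamRR T1).num (lamRR T2)
        rw [hnum] at h'
        rw [hrrsum]
        exact h'
      have hceilT : ⌈lamRR T⌉ = (lamRR T1).num + ⌈lamRR T2⌉ := by
        have h' := Int.ceil_add_intCast (lamRR T2) (lamRR T1).num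
        rw [hnum] at h'
        rw [hrrsum, add_comm (lamRR T1) (lamRR T2)]
        rw [h', add_comm]
      rcases hn2 with h | h
      · left; rw [hcv, hfloorT, hn1', h]
      · right; rw [hcv, hceilT, hn1', h]
    · have hnum : (((lamRR T2).num : ℤ) : ℚ) = lamRR T2 := (Rat.den_eq_one_iff _).mp hd2
      have hfl2 : ⌊lamRR T2⌋ = (lamRR T2).num := by
        conv_lhs => rw [← hnum]
        exact Int.floor_intCast _
      have hcl2 : ⌈lamRR T2⌉ = (lamRR T2).num := by
        conv_lhs => rw [← hnum]
        exact Int.ceil_intCast _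
      have hn2' : ((rowSet T2 i ∩ rowSet T2 j).card : ℤ) = (lamRR T2).num := by
        rcases hn2 with h | h
        · rw [h, hfl2]
        · rw [h, hcl2]
      have hfloorT : ⌊lamRR T⌋ = ⌊lamRR T1⌋ + (lamRR T2).num := by
        have h' := Int.floor_add_intCast (lamRR T1) (lamRR T2).num
        rw [hnum] at h'
        rw [hrrsum]
        exact h'
      have hceilT : ⌈lamRR T⌉ = ⌈lamRR T1⌉ + (lamRR T2).num := by
        have h' := Int.ceil_add_intCast (lamRR T1) (lamRR T2).num
        rw [hnum] at h'
        rw [hrrsum]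
        exact h'
      rcases hn1 with h | h
      · left; rw [hcv, hfloorT, hn2', h]
      · right; rw [hcv, hceilT, hn2', h]
  · -- cc condition
    have himE : ∀ (A : Finset (Fin v1)) (B : Finset (Fin v2)),
        A.image (E1 (v2 := v2)) ∩ B.image E2 = ∅ := by
      intro A B
      rw [Finset.eq_empty_iff_forall_notMem]
      intro x hx
      simp only [Finset.mem_inter, Finset.mem_image] at hx
      obtain ⟨⟨a, _, ha⟩, ⟨b, _, hb⟩⟩ := hx
      exact neE12 a b (ha.trans hb.symm)
    have hcc1nn : (0 : ℚ) ≤ lamCC T1 := by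
      unfold lamCC
      apply div_nonneg
      · apply Finset.sum_nonneg; intro p _; positivity
      · have h2 : (2 : ℚ) ≤ (c1 : ℚ) := by exact_mod_cast hc1
        nlinarith
    have hcc2nn : (0 : ℚ) ≤ lamCC T2 := by
      unfold lamCC
      apply div_nonneg
      · apply Finset.sum_nonneg; intro p _; positivity
      · have h2 : (2 : ℚ) ≤ (c2 : ℚ) := by exact_mod_cast hc2
        nlinarith
    have hfcc1 : 0 ≤ ⌊lamCC T1⌋ := Int.le_floor.mpr (by exact_mod_cast hcc1nn)
    have hccc1 : ⌈lamCC T1⌉ ≤ 1 := Int.ceil_le.mpr (by exact_mod_cast h3.1)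
    have hfc1'' : ⌊lamCC T1⌋ ≤ ⌈lamCC T1⌉ := Int.floor_le_ceil _
    have hfcc2 : 0 ≤ ⌊lamCC T2⌋ := Int.le_floor.mpr (by exact_mod_cast hcc2nn)
    have hccc2 : ⌈lamCC T2⌉ ≤ 1 := Int.ceil_le.mpr (by exact_mod_cast h3.2)
    have hfc2'' : ⌊lamCC T2⌋ ≤ ⌈lamCC T2⌉ := Int.floor_le_ceil _
    have hval : ∀ p : Fin (c1 + c2) × Fin (c1 + c2), p.1 ≠ p.2 →
        ((colSet T p.1 ∩ colSet T p.2).card : ℤ) = 0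
        ∨ ((colSet T p.1 ∩ colSet T p.2).card : ℤ) = 0 + 1 := by
      rintro ⟨j, j'⟩ hne
      simp only at hne ⊢
      by_cases hj : (j : ℕ) < c1 <;> by_cases hj' : (j' : ℕ) < c1
      · rw [hcolA T1 T2 T hT j hj, hcolA T1 T2 T hT j' hj',
          ← Finset.image_inter _ _ injE1, Finset.card_image_of_injective _ injE1]
        have hne' : (⟨(j : ℕ), hj⟩ : Fin c1) ≠ ⟨(j' : ℕ), hj'⟩ := by
          intro hh
          exact hne (Fin.ext (show (j : ℕ) = (j' : ℕ) by have := congrArg Fin.val hh; simpa using this))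
        rcases hT1.2.2.2.2 _ _ hne' with h | h <;> omega
      · rw [hcolA T1 T2 T hT j hj, hcolB T1 T2 T hT j' hj', himE, Finset.card_empty]
        left; rfl
      · rw [hcolA T1 T2 T hT j' hj', hcolB T1 T2 T hT j hj, Finset.inter_comm, himE,
          Finset.card_empty]
        left; rfl
      · rw [hcolB T1 T2 T hT j hj, hcolB T1 T2 T hT j' hj',
          ← Finset.image_inter _ _ injE2, Finset.card_image_of_injective _ injE2]
        have hne' : (⟨(j : ℕ) - c1, by have := j.isLt; omega⟩ : Fin c2)
            ≠ ⟨(j' : ℕ) - c1, by have := j'.isLt; omega⟩ := by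
          intro hh
          have := congrArg Fin.val hh
          simp only [Fin.val_mk] at this
          exact hne (Fin.ext (show (j : ℕ) = (j' : ℕ) by omega))
        rcases hT2.2.2.2.2 _ _ hne' with h | h <;> omega
    have hSne : ((Finset.univ : Finset (Fin (c1 + c2) × Fin (c1 + c2))).filter
        (fun p => p.1 < p.2)).Nonempty := by
      refine ⟨(⟨0, by omega⟩, ⟨1, by omega⟩), Finset.mem_filter.mpr ⟨Finset.mem_univ _, ?_⟩⟩
      simp [Fin.lt_def]
    have hcardS : ((((Finset.univ : Finset (Fin (c1 + c2) × Fin (c1 + c2))).filter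
          (fun p => p.1 < p.2)).card : ℚ))
        = ((c1 : ℚ) + (c2 : ℚ)) * (((c1 : ℚ) + (c2 : ℚ)) - 1) / 2 := by
      have h := pairs_card (c1 + c2)
      have hge : 1 ≤ c1 + c2 := by omega
      have h2 : ((((Finset.univ : Finset (Fin (c1 + c2) × Fin (c1 + c2))).filter
            (fun p => p.1 < p.2)).card : ℚ)) * 2
          = ((c1 : ℚ) + (c2 : ℚ)) * (((c1 : ℚ) + (c2 : ℚ)) - 1) := by
        have := congrArg (Nat.cast : ℕ → ℚ) h
        push_cast [Nat.cast_sub hge] at this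
        convert this using 2 <;> push_cast <;> ring
      linarith
    have hq : lamCC T = (∑ p ∈ (Finset.univ : Finset (Fin (c1 + c2) × Fin (c1 + c2))).filter
          (fun p => p.1 < p.2), (((colSet T p.1 ∩ colSet T p.2).card : ℤ) : ℚ))
        / ((((Finset.univ : Finset (Fin (c1 + c2) × Fin (c1 + c2))).filter
          (fun p => p.1 < p.2)).card : ℚ)) := by
      rw [hcardS]
      unfold lamCC
      push_cast
      rfl
    have key := avg_pair _ hSne
      (fun p : Fin (c1 + c2) × Fin (c1 + c2) => ((colSet T p.1 ∩ colSet T p.2).card : ℤ)) 0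
      (fun p hp => hval p (ne_of_lt (Finset.mem_filter.mp hp).2)) (lamCC T) hq
    intro i j hne
    rcases lt_or_gt_of_ne hne with hlt | hgt
    · have h := key (i, j) (Finset.mem_filter.mpr ⟨Finset.mem_univ _, hlt⟩)
      simpa using h
    · have h := key (j, i) (Finset.mem_filter.mpr ⟨Finset.mem_univ _, hgt⟩)
      simp only at h
      rw [Finset.inter_comm] at h
      exact h
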